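/- Let g = (√5−1)/2, G = (√5+1)/2, and for g ≤ α ≤ 1 let J(α) = ∫_{α−2}^{α} log|x| · h_α(x) dx, where h_α is the invariant density: h_α(x) = (3 log G)^{−1}·[1/(x+G+1)] on [α−2,(α−1)/(2−α)), (3 log G)^{−1}·[1/(x+G+1)+1/(x+G−1)−1/(x+1)] on [(α−1)/(2−α),(1−α)/α), and (3 log G)^{−1}·[1/(x+G−1)] on [(1−α)/α,α). Then J is constant on [g,1]: J′(α) = 0 for all α ∈ (g,1). -/

import Mathlib

/-- The invariant density h_α for g ≤ α ≤ 1. -/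
noncomputable def hDen (α x : ℝ) : ℝ :=
  let G : ℝ := (Real.sqrt 5 + 1)/2
  (3 * Real.log G)⁻¹ *
    (if x < (α-1)/(2-α) then 1/(x+G+1)
     else if x < (1-α)/α then 1/(x+G+1) + 1/(x+G-1) - 1/(x+1)
     else 1/(x+G-1))

/-- The entropy integral J(α) = ∫_{α−2}^{α} log|x| h_α(x) dx. -/
noncomputable def J (α : ℝ) : ℝ := ∫ x in (α-2)..α, Real.log |x| * hDen α x

open MeasureTheory intervalIntegral Real Set

lemma logII (u v : ℝ) : IntervalIntegrable Real.log volume u v := by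
  have key : ∀ w : ℝ, 0 ≤ w → IntervalIntegrable Real.log volume 0 w := by
    intro w hw
    have h01 : IntervalIntegrable Real.log volume 0 1 := by
      have h := intervalIntegrable_deriv_of_nonneg (a := (0:ℝ)) (b := 1)
        (g := fun x => x - x * Real.log x) (g' := fun x => -Real.log x)
        (by fun_prop) ?_ ?_
      · have h2 := h.neg
        refine h2.congr ?_
        intro x _
        simp
      · intro x hx
        simp only [min_eq_left zero_le_one, max_eq_right zero_le_one] at hx
        have hx0 : x ≠ 0 := ne_of_gt hx.1
        have : HasDerivAt (fun y : ℝ => y - y * Real.log y) (1 - (1 * Real.log x + x * x⁻¹)) x :=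
          (hasDerivAt_id x).sub ((hasDerivAt_id x).mul (Real.hasDerivAt_log hx0))
        convert this using 1
        field_simp
        ring
      · intro x hx
        simp only [min_eq_left zero_le_one, max_eq_right zero_le_one] at hx
        have : Real.log x ≤ 0 := Real.log_nonpos (le_of_lt hx.1) (le_of_lt hx.2)
        linarith
    rcases le_or_gt w 1 with h1 | h1
    · refine h01.mono_set ?_
      rw [Set.uIcc_of_le hw, Set.uIcc_of_le zero_le_one]
      exact Set.Icc_subset_Icc le_rfl h1
    · refine h01.trans ?_
      apply ContinuousOn.intervalIntegrable
      intro x hx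
      rw [Set.uIcc_of_le (le_of_lt h1)] at hx
      exact (Real.continuousAt_log (by intro h; rw [h] at hx; linarith [hx.1])).continuousWithinAt
  have keyall : ∀ w : ℝ, IntervalIntegrable Real.log volume 0 w := by
    intro w
    rcases le_or_gt 0 w with h | h
    · exact key w h
    · have h2 := ((IntervalIntegrable.iff_comp_neg (f := Real.log)).mp (key (-w) (by linarith)))
      simp only [neg_zero, neg_neg] at h2
      simpa [Real.log_neg_eq_log] using h2
  exact (keyall u).symm.trans (keyall v)

lemma fII (a u v : ℝ) (h : ∀ x ∈ Set.uIcc u v, x + a ≠ 0) :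
    IntervalIntegrable (fun x => Real.log |x| / (x + a)) volume u v := by
  have : IntervalIntegrable (fun x => Real.log x * (x + a)⁻¹) volume u v :=
    (logII u v).mul_continuousOn
      (((continuous_id.add continuous_const).continuousOn).inv₀ h)
  simpa [Real.log_abs, div_eq_mul_inv] using this

lemma fCont (a t : ℝ) (ht : t ≠ 0) (h : t + a ≠ 0) :
    ContinuousAt (fun x => Real.log |x| / (x + a)) t := by
  have : ContinuousAt (fun x => Real.log x / (x + a)) t :=
    (Real.continuousAt_log ht).div (continuousAt_id.add continuousAt_const) h
  simpa [Real.log_abs] using this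

lemma fMeas (a : ℝ) : Measurable (fun x : ℝ => Real.log |x| / (x + a)) :=
  (Real.measurable_log.comp measurable_abs).div ((measurable_id.add_const a))

lemma sqrt5_sq : Real.sqrt 5 ^ 2 = 5 := Real.sq_sqrt (by norm_num)

lemma sqrt5_gt : 2 < Real.sqrt 5 := by
  nlinarith [sqrt5_sq, Real.sqrt_nonneg 5]

lemma sqrt5_lt : Real.sqrt 5 < 3 := by
  nlinarith [sqrt5_sq, Real.sqrt_nonneg 5]

structure NF (β : ℝ) : Prop where
  pos : 0 < β
  lt1 : β < 1
  two : 0 < 2 - β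
  pneg : (β-1)/(2-β) < 0
  qpos : 0 < (1-β)/β
  qlt : (1-β)/β < β
  plow : β - 2 < (β-1)/(2-β)
  p1 : 0 < (β-1)/(2-β) + 1
  pG : 0 < (β-1)/(2-β) + ((Real.sqrt 5+1)/2 - 1)
  q1 : 0 < (1-β)/β + 1
  qG : 0 < (1-β)/β + ((Real.sqrt 5+1)/2 + 1)
  sG : 0 < β + (Real.sqrt 5+1)/2 - 1

lemma numfacts (β : ℝ) (hβ : β ∈ Set.Ioo ((Real.sqrt 5 - 1)/2) 1) : NF β := by
  obtain ⟨hg, h1⟩ := hβ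
  have h2 := sqrt5_gt
  have h3 := sqrt5_lt
  have hsq := sqrt5_sq
  have hpos : 0 < β := by nlinarith
  have htwo : 0 < 2 - β := by linarith
  have hq : 0 < (1-β)/β := div_pos (by linarith) hpos
  refine ⟨hpos, h1, htwo, ?_, ?_, ?_, ?_, ?_, ?_, ?_, ?_, ?_⟩
  · exact div_neg_of_neg_of_pos (by linarith) htwo
  · exact div_pos (by linarith) hpos
  · rw [div_lt_iff₀ hpos]; nlinarith
  · rw [show β - 2 = (β-2) by rfl]
    rw [lt_div_iff₀ htwo]; nlinarith
  · have h : (β-1)/(2-β) + 1 = 1/(2-β) := by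
      rw [div_add' _ _ _ (ne_of_gt htwo)]
      ring_nf
    rw [h]; positivity
  · have h : (β-1)/(2-β) + ((Real.sqrt 5+1)/2 - 1) =
      ((β-1) + ((Real.sqrt 5-1)/2) * (2-β))/(2-β) := by field_simp; ring
    rw [h]
    apply div_pos ?_ htwo
    nlinarith
  · linarith
  · nlinarith
  · nlinarith

noncomputable def GG : ℝ := (Real.sqrt 5 + 1)/2

lemma GG_def : GG = (Real.sqrt 5 + 1)/2 := rfl

noncomputable def ff (a x : ℝ) : ℝ := Real.log |x| / (x + a)

lemma ffII (a u v : ℝ) (hu : 0 < u + a) (hv : 0 < v + a) :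
    IntervalIntegrable (ff a) volume u v := by
  apply fII
  intro x hx
  rw [Set.uIcc] at hx
  have h1 : min u v ≤ x := hx.1
  rcases le_total u v with h | h
  · rw [min_eq_left h] at h1; linarith
  · rw [min_eq_right h] at h1; linarith

lemma ae_ne (t : ℝ) : ∀ᵐ x : ℝ ∂(volume : Measure ℝ), x ≠ t := by
  rw [MeasureTheory.ae_iff]
  simp only [ne_eq, not_not, Set.setOf_eq_eq_singleton]
  exact Real.volume_singleton

lemma J_eq (α β : ℝ) (hα : α ∈ Set.Ioo ((Real.sqrt 5 - 1)/2) 1)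
    (hβ : β ∈ Set.Ioo ((Real.sqrt 5 - 1)/2) 1) :
    J β = (3 * Real.log GG)⁻¹ *
      (((∫ x in (α-2)..((1-β)/β), ff (GG+1) x) - ∫ x in (α-2)..(β-2), ff (GG+1) x)
      + ((∫ x in ((α-1)/(2-α))..β, ff (GG-1) x)
          - ∫ x in ((α-1)/(2-α))..((β-1)/(2-β)), ff (GG-1) x)
      - ((∫ x in ((α-1)/(2-α))..((1-β)/β), ff 1 x)
          - ∫ x in ((α-1)/(2-α))..((β-1)/(2-β)), ff 1 x)) := by
  obtain nfα := numfacts α hα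
  obtain nfβ := numfacts β hβ
  have h2 := sqrt5_gt
  have hGG1 : (1:ℝ) < GG := by rw [GG_def]; linarith
  set c : ℝ := (3 * Real.log GG)⁻¹ with hc
  set pα := (α-1)/(2-α) with hpα
  set pβ := (β-1)/(2-β) with hpβ
  set qβ := (1-β)/β with hqβ
  -- positivity of shifted endpoints
  have hβG : 0 < β + (GG + 1) := by rw [GG_def]; have := nfβ.sG; linarith
  have hβ2G : 0 < (β-2) + (GG+1) := by rw [GG_def]; have := nfβ.sG; linarith
  have hα2G : 0 < (α-2) + (GG+1) := by rw [GG_def]; have := nfα.sG; linarith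
  have hpβG1 : 0 < pβ + (GG-1) := by rw [GG_def]; have := nfβ.pG; linarith
  have hpαG1 : 0 < pα + (GG-1) := by rw [GG_def]; have := nfα.pG; linarith
  have hpβG : 0 < pβ + (GG+1) := by linarith
  have hqβG : 0 < qβ + (GG+1) := by have := nfβ.qpos; linarith
  have hqβG1 : 0 < qβ + (GG-1) := by have := nfβ.qpos; linarith
  have hβG1 : 0 < β + (GG-1) := by have := nfβ.pos; linarith
  have hpβ1 : 0 < pβ + 1 := nfβ.p1
  have hpα1 : 0 < pα + 1 := nfα.p1
  have hqβ1 : 0 < qβ + 1 := nfβ.q1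
  -- interval integrabilities
  have ha1 : IntervalIntegrable (ff (GG+1)) volume (β-2) pβ := ffII _ _ _ hβ2G hpβG
  have ha2 : IntervalIntegrable (ff (GG+1)) volume pβ qβ := ffII _ _ _ hpβG hqβG
  have hb2 : IntervalIntegrable (ff (GG-1)) volume pβ qβ := ffII _ _ _ hpβG1 hqβG1
  have hc2 : IntervalIntegrable (ff 1) volume pβ qβ := ffII _ _ _ hpβ1 hqβ1
  have hb3 : IntervalIntegrable (ff (GG-1)) volume qβ β := ffII _ _ _ hqβG1 hβG1
  have ha0 : IntervalIntegrable (ff (GG+1)) volume (α-2) (β-2) := ffII _ _ _ hα2G hβ2G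
  have ha0q : IntervalIntegrable (ff (GG+1)) volume (α-2) qβ := ffII _ _ _ hα2G hqβG
  have hb0 : IntervalIntegrable (ff (GG-1)) volume pα pβ := ffII _ _ _ hpαG1 hpβG1
  have hb0β : IntervalIntegrable (ff (GG-1)) volume pα β := ffII _ _ _ hpαG1 hβG1
  have hc0p : IntervalIntegrable (ff 1) volume pα pβ := ffII _ _ _ hpα1 hpβ1
  have hc0q : IntervalIntegrable (ff 1) volume pα qβ := ffII _ _ _ hpα1 hqβ1
  -- ordering
  have hord1 : β - 2 < pβ := nfβ.plow
  have hord2 : pβ < qβ := lt_trans nfβ.pneg nfβ.qpos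
  have hord3 : qβ < β := nfβ.qlt
  -- pointwise identities
  have e1 : ∀ᵐ x : ℝ ∂volume, x ∈ Set.uIoc (β-2) pβ →
      Real.log |x| * hDen β x = c * ff (GG+1) x := by
    filter_upwards [ae_ne pβ] with x hxne hx
    rw [Set.uIoc_of_le (le_of_lt hord1)] at hx
    have hlt : x < pβ := lt_of_le_of_ne hx.2 hxne
    simp only [hDen, ← GG_def, ← hpβ]
    rw [if_pos hlt]
    simp only [ff, ← hc]
    field_simp
    ring
  have e2 : ∀ᵐ x : ℝ ∂volume, x ∈ Set.uIoc pβ qβ →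
      Real.log |x| * hDen β x = c * (ff (GG+1) x + ff (GG-1) x - ff 1 x) := by
    filter_upwards [ae_ne qβ] with x hxne hx
    rw [Set.uIoc_of_le (le_of_lt hord2)] at hx
    have hlt : x < qβ := lt_of_le_of_ne hx.2 hxne
    simp only [hDen, ← GG_def, ← hpβ, ← hqβ]
    rw [if_neg (not_lt.2 (le_of_lt hx.1)), if_pos hlt]
    simp only [ff, ← hc]
    ring
  have e3 : ∀ᵐ x : ℝ ∂volume, x ∈ Set.uIoc qβ β →
      Real.log |x| * hDen β x = c * ff (GG-1) x := by
    filter_upwards with x hx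
    rw [Set.uIoc_of_le (le_of_lt hord3)] at hx
    simp only [hDen, ← GG_def, ← hpβ, ← hqβ]
    rw [if_neg (not_lt.2 (le_of_lt (lt_trans hord2 hx.1))),
        if_neg (not_lt.2 (le_of_lt hx.1))]
    simp only [ff, ← hc]
    ring
  -- integrability of the full integrand on the three pieces
  have hI1 : IntervalIntegrable (fun x => Real.log |x| * hDen β x) volume (β-2) pβ := by
    rw [intervalIntegrable_iff]
    refine (intervalIntegrable_iff.mp (ha1.const_mul c)).congr_fun_ae ?_
    exact Filter.EventuallyEq.symm ((ae_restrict_iff' measurableSet_uIoc).2 e1)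
  have hI2 : IntervalIntegrable (fun x => Real.log |x| * hDen β x) volume pβ qβ := by
    rw [intervalIntegrable_iff]
    refine (intervalIntegrable_iff.mp (((ha2.add hb2).sub hc2).const_mul c)).congr_fun_ae ?_
    exact Filter.EventuallyEq.symm ((ae_restrict_iff' measurableSet_uIoc).2 e2)
  have hI3 : IntervalIntegrable (fun x => Real.log |x| * hDen β x) volume qβ β := by
    rw [intervalIntegrable_iff]
    refine (intervalIntegrable_iff.mp (hb3.const_mul c)).congr_fun_ae ?_
    exact Filter.EventuallyEq.symm ((ae_restrict_iff' measurableSet_uIoc).2 e3)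
  -- split
  have hsplit : J β = (∫ x in (β-2)..pβ, Real.log |x| * hDen β x)
      + (∫ x in pβ..qβ, Real.log |x| * hDen β x)
      + (∫ x in qβ..β, Real.log |x| * hDen β x) := by
    rw [J]
    rw [← intervalIntegral.integral_add_adjacent_intervals (hI1.trans hI2) hI3,
        ← intervalIntegral.integral_add_adjacent_intervals hI1 hI2]
  rw [hsplit,
    intervalIntegral.integral_congr_ae e1,
    intervalIntegral.integral_congr_ae e2,
    intervalIntegral.integral_congr_ae e3,
    intervalIntegral.integral_const_mul, intervalIntegral.integral_const_mul,
    intervalIntegral.integral_const_mul]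
  rw [intervalIntegral.integral_sub (ha2.add hb2) hc2, intervalIntegral.integral_add ha2 hb2]
  have k1 : (∫ x in (β-2)..pβ, ff (GG+1) x) + (∫ x in pβ..qβ, ff (GG+1) x)
      = ∫ x in (β-2)..qβ, ff (GG+1) x :=
    intervalIntegral.integral_add_adjacent_intervals ha1 ha2
  have k2 : (∫ x in pβ..qβ, ff (GG-1) x) + (∫ x in qβ..β, ff (GG-1) x)
      = ∫ x in pβ..β, ff (GG-1) x :=
    intervalIntegral.integral_add_adjacent_intervals hb2 hb3
  have k3 : (∫ x in (β-2)..qβ, ff (GG+1) x)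
      = (∫ x in (α-2)..qβ, ff (GG+1) x) - (∫ x in (α-2)..(β-2), ff (GG+1) x) :=
    (intervalIntegral.integral_interval_sub_left ha0q ha0).symm
  have k4 : (∫ x in pβ..β, ff (GG-1) x)
      = (∫ x in pα..β, ff (GG-1) x) - (∫ x in pα..pβ, ff (GG-1) x) :=
    (intervalIntegral.integral_interval_sub_left hb0β hb0).symm
  have k5 : (∫ x in pβ..qβ, ff 1 x)
      = (∫ x in pα..qβ, ff 1 x) - (∫ x in pα..pβ, ff 1 x) :=
    (intervalIntegral.integral_interval_sub_left hc0q hc0p).symm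
  rw [← k3, ← k4, ← k5, ← k1, ← k2]
  ring

/-- J is constant on [g,1]: J′(α) = 0 for every α ∈ (g,1). -/
theorem stmt10 (α : ℝ) (hα : α ∈ Set.Ioo ((Real.sqrt 5 - 1)/2) 1) :
    HasDerivAt J 0 α := by
  obtain nfα := numfacts α hα
  have h2 := sqrt5_gt
  have hsq := sqrt5_sq
  have hGG1 : (1:ℝ) < GG := by rw [GG_def]; linarith
  have hGsq : GG^2 = GG + 1 := by rw [GG_def]; nlinarith [sqrt5_sq]
  set c : ℝ := (3 * Real.log GG)⁻¹ with hc
  set pα := (α-1)/(2-α) with hpα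
  set qα := (1-α)/α with hqα
  -- positivity facts
  have hα2G : 0 < (α-2) + (GG+1) := by rw [GG_def]; have := nfα.sG; linarith
  have hpαG1 : 0 < pα + (GG-1) := by rw [GG_def]; have := nfα.pG; linarith
  have hqαG : 0 < qα + (GG+1) := by have := nfα.qpos; linarith
  have hqαG1 : 0 < qα + (GG-1) := by have := nfα.qpos; linarith
  have hαG1 : 0 < α + (GG-1) := by have := nfα.pos; linarith
  have hpα1 : 0 < pα + 1 := nfα.p1
  have hqα1 : 0 < qα + 1 := nfα.q1
  have hqαne : qα ≠ 0 := ne_of_gt nfα.qpos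
  have hpαne : pα ≠ 0 := ne_of_lt nfα.pneg
  have hα2ne : α - 2 ≠ 0 := by have := nfα.lt1; intro h; linarith
  have hαne : α ≠ 0 := ne_of_gt nfα.pos
  -- measurability helper
  have hSM : ∀ (a t : ℝ), StronglyMeasurableAtFilter (ff a) (nhds t) := by
    intro a t
    exact ((fMeas a).stronglyMeasurable).stronglyMeasurableAtFilter
  -- inner derivatives
  have hq' : HasDerivAt (fun β : ℝ => (1-β)/β) (-(1/α^2)) α := by
    have h := ((hasDerivAt_const α (1:ℝ)).sub (hasDerivAt_id α)).div (hasDerivAt_id α) hαne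
    refine h.congr_deriv ?_
    simp only [id, Pi.sub_apply]
    field_simp
    ring
  have hp' : HasDerivAt (fun β : ℝ => (β-1)/(2-β)) (1/(2-α)^2) α := by
    have h := ((hasDerivAt_id α).sub_const (1:ℝ)).div
      ((hasDerivAt_const α (2:ℝ)).sub (hasDerivAt_id α)) (by simpa using nfα.two.ne')
    refine h.congr_deriv ?_
    have h2α : (2 - α) ≠ 0 := by have := nfα.two; intro h; linarith
    simp only [id, Pi.sub_apply]
    field_simp
    ring
  -- FTC derivatives
  have hF1q : HasDerivAt (fun t => ∫ x in (α-2)..t, ff (GG+1) x) (ff (GG+1) qα) qα :=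
    intervalIntegral.integral_hasDerivAt_right (ffII _ _ _ hα2G hqαG) (hSM _ _)
      (fCont _ _ hqαne (ne_of_gt hqαG))
  have hF1u : HasDerivAt (fun t => ∫ x in (α-2)..t, ff (GG+1) x) (ff (GG+1) (α-2)) (α-2) :=
    intervalIntegral.integral_hasDerivAt_right (IntervalIntegrable.refl) (hSM _ _)
      (fCont _ _ hα2ne (ne_of_gt hα2G))
  have hF2α : HasDerivAt (fun t => ∫ x in pα..t, ff (GG-1) x) (ff (GG-1) α) α :=
    intervalIntegral.integral_hasDerivAt_right (ffII _ _ _ hpαG1 hαG1) (hSM _ _)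
      (fCont _ _ hαne (ne_of_gt hαG1))
  have hF2p : HasDerivAt (fun t => ∫ x in pα..t, ff (GG-1) x) (ff (GG-1) pα) pα :=
    intervalIntegral.integral_hasDerivAt_right (IntervalIntegrable.refl) (hSM _ _)
      (fCont _ _ hpαne (ne_of_gt hpαG1))
  have hF3q : HasDerivAt (fun t => ∫ x in pα..t, ff 1 x) (ff 1 qα) qα :=
    intervalIntegral.integral_hasDerivAt_right (ffII _ _ _ hpα1 hqα1) (hSM _ _)
      (fCont _ _ hqαne (ne_of_gt hqα1))
  have hF3p : HasDerivAt (fun t => ∫ x in pα..t, ff 1 x) (ff 1 pα) pα :=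
    intervalIntegral.integral_hasDerivAt_right (IntervalIntegrable.refl) (hSM _ _)
      (fCont _ _ hpαne (ne_of_gt hpα1))
  -- compositions
  have T1 : HasDerivAt (fun β : ℝ => ∫ x in (α-2)..((1-β)/β), ff (GG+1) x)
      (ff (GG+1) qα * (-(1/α^2))) α := by
    have h := hF1q.comp α hq'
    simpa [Function.comp_def] using h
  have T2 : HasDerivAt (fun β : ℝ => ∫ x in (α-2)..(β-2), ff (GG+1) x)
      (ff (GG+1) (α-2)) α := by
    have h := hF1u.comp α ((hasDerivAt_id α).sub_const (2:ℝ))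
    simpa [Function.comp_def] using h
  have T3 : HasDerivAt (fun β : ℝ => ∫ x in pα..β, ff (GG-1) x) (ff (GG-1) α) α := hF2α
  have T4 : HasDerivAt (fun β : ℝ => ∫ x in pα..((β-1)/(2-β)), ff (GG-1) x)
      (ff (GG-1) pα * (1/(2-α)^2)) α := by
    have h := hF2p.comp α hp'
    simpa [Function.comp_def] using h
  have T5 : HasDerivAt (fun β : ℝ => ∫ x in pα..((1-β)/β), ff 1 x)
      (ff 1 qα * (-(1/α^2))) α := by
    have h := hF3q.comp α hq'
    simpa [Function.comp_def] using h
  have T6 : HasDerivAt (fun β : ℝ => ∫ x in pα..((β-1)/(2-β)), ff 1 x)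
      (ff 1 pα * (1/(2-α)^2)) α := by
    have h := hF3p.comp α hp'
    simpa [Function.comp_def] using h
  -- assemble
  have hD : HasDerivAt (fun β : ℝ => c *
      (((∫ x in (α-2)..((1-β)/β), ff (GG+1) x) - ∫ x in (α-2)..(β-2), ff (GG+1) x)
      + ((∫ x in pα..β, ff (GG-1) x) - ∫ x in pα..((β-1)/(2-β)), ff (GG-1) x)
      - ((∫ x in pα..((1-β)/β), ff 1 x) - ∫ x in pα..((β-1)/(2-β)), ff 1 x)))
      (c * ((ff (GG+1) qα * (-(1/α^2)) - ff (GG+1) (α-2))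
        + (ff (GG-1) α - ff (GG-1) pα * (1/(2-α)^2))
        - (ff 1 qα * (-(1/α^2)) - ff 1 pα * (1/(2-α)^2)))) α :=
    (((T1.sub T2).add (T3.sub T4)).sub (T5.sub T6)).const_mul c
  have hDzero : (ff (GG+1) qα * (-(1/α^2)) - ff (GG+1) (α-2))
        + (ff (GG-1) α - ff (GG-1) pα * (1/(2-α)^2))
        - (ff 1 qα * (-(1/α^2)) - ff 1 pα * (1/(2-α)^2)) = 0 := by
    have h2α : (2:ℝ) - α ≠ 0 := nfα.two.ne'
    have h1α : (1:ℝ) - α ≠ 0 := by have := nfα.lt1; intro h; linarith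
    have hs : 0 < α + GG - 1 := by linarith [hαG1]
    have hGne : GG ≠ 0 := by linarith
    have hG1ne : GG + 1 ≠ 0 := by linarith
    have habs_q : |qα| = qα := abs_of_pos nfα.qpos
    have habs_p : |pα| = -pα := abs_of_neg nfα.pneg
    have habs_u : |α - 2| = 2 - α := by
      rw [abs_of_neg (by have := nfα.lt1; linarith : α - 2 < 0)]; ring
    have habs_a : |α| = α := abs_of_pos nfα.pos
    have hlq : Real.log qα = Real.log (1-α) - Real.log α := by
      rw [hqα, Real.log_div h1α hαne]
    have hlp : Real.log |pα| = Real.log (1-α) - Real.log (2-α) := by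
      rw [habs_p]
      have hh : -pα = (1-α)/(2-α) := by rw [hpα]; ring
      rw [hh, Real.log_div h1α h2α]
    have d1 : qα + (GG+1) = GG * (α + GG - 1) / α := by
      rw [hqα]; field_simp; linear_combination -hGsq
    have d2 : pα + (GG-1) = (α + GG - 1) / ((GG+1) * (2-α)) := by
      rw [hpα]; field_simp; linear_combination (2-α) * hGsq
    have d3 : qα + 1 = 1/α := by rw [hqα, div_add' _ _ _ hαne]; ring_nf
    have d4 : pα + 1 = 1/(2-α) := by rw [hpα, div_add' _ _ _ h2α]; ring_nf
    have d5 : α - 2 + (GG+1) = α + GG - 1 := by ring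
    have d6 : α + (GG-1) = α + GG - 1 := by ring
    simp only [ff, habs_q, habs_u, habs_a, hlq, hlp, d1, d2, d3, d4, d5, d6]
    set s := α + GG - 1 with hsdef
    set L1 := Real.log (1-α) with hL1
    set L2 := Real.log (2-α) with hL2
    set L3 := Real.log α with hL3
    have hsne : s ≠ 0 := ne_of_gt hs
    have hA : (L1 - L3)/(GG*s/α) * (-(1/α^2)) - (L1-L3)/(1/α) * (-(1/α^2)) = (L1 - L3)/s := by
      field_simp
      linear_combination (L1 - L3) * hGsq
    have hB : (L1 - L2)/(s/((GG+1)*(2-α))) * (1/(2-α)^2)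
        - (L1-L2)/(1/(2-α)) * (1/(2-α)^2) = (L1-L2)/s := by
      rw [hsdef]
      have hsne2 : α + GG - 1 ≠ 0 := hsdef ▸ hsne
      field_simp
      ring
    linear_combination hA - hB
  rw [hDzero, mul_zero] at hD
  refine hD.congr_of_eventuallyEq ?_
  have hmem : Set.Ioo ((Real.sqrt 5 - 1)/2) 1 ∈ nhds α := Ioo_mem_nhds hα.1 hα.2
  filter_upwards [hmem] with β hβ
  exact J_eq α β hα hβ
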